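/- For every prime p and every i ≥ 0, the set I_i ⊆ R defined by I_0 = R and I_i = {r ∈ R : r^p ∈ p·I_{i-1}} is an ideal of R. -/

import Mathlib

/-- The recursively defined sets `I_i`: `I_0 = R`, `I_{i+1} = {r | r^p ∈ p • I_i}`. -/
def WittI (p : ℕ) {R : Type*} [CommRing R] : ℕ → Set R
  | 0 => Set.univ
  | i + 1 => {r : R | ∃ x ∈ WittI p i, r ^ p = (p : R) * x}

lemma WittI_succ_subset (p : ℕ) {R : Type*} [CommRing R] (i : ℕ) :
    (WittI p (i + 1) : Set R) ⊆ WittI p i := by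
  induction i with
  | zero => intro r _; trivial
  | succ i ih =>
    rintro r ⟨x, hx, hr⟩
    exact ⟨x, ih hx, hr⟩

theorem stmt_0 (p : ℕ) (hp : p.Prime) (R : Type*) [CommRing R] (i : ℕ) :
    ∃ J : Ideal R, (J : Set R) = WittI p i := by
  induction i with
  | zero => exact ⟨⊤, rfl⟩
  | succ i ih =>
    obtain ⟨J, hJ⟩ := ih
    have hmemJ : ∀ r : R, r ∈ J ↔ r ∈ WittI p i := fun r => by
      rw [← hJ]; rfl
    refine ⟨{ carrier := WittI p (i + 1), add_mem' := ?_, zero_mem' := ?_, smul_mem' := ?_ }, rfl⟩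
    · -- add_mem
      intro a b hab' hbb'
      obtain ⟨x, hx, hax⟩ := hab'
      obtain ⟨y, hy, hby⟩ := hbb'
      have ha : a ∈ J := (hmemJ a).2 (WittI_succ_subset p i ⟨x, hx, hax⟩)
      refine ⟨x + y + ∑ k ∈ Finset.Ioo 0 p, a ^ k * b ^ (p - k) * ↑(p.choose k / p),
        (hmemJ _).1 ?_, ?_⟩
      · refine add_mem (add_mem ((hmemJ x).2 hx) ((hmemJ y).2 hy)) (Ideal.sum_mem J ?_)
        intro k hk
        rw [Finset.mem_Ioo] at hk
        have : a ^ k ∈ J := Ideal.pow_mem_of_mem J ha k hk.1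
        exact Ideal.mul_mem_right _ _ (Ideal.mul_mem_right _ _ this)
      · rw [add_pow_prime_eq' hp, hax, hby]; ring
    · -- zero_mem
      exact ⟨0, (hmemJ 0).1 J.zero_mem, by rw [zero_pow hp.ne_zero, mul_zero]⟩
    · -- smul_mem
      intro c a ha'
      obtain ⟨x, hx, hax⟩ := ha'
      refine ⟨c ^ p * x, (hmemJ _).1 (Ideal.mul_mem_left _ _ ((hmemJ x).2 hx)), ?_⟩
      rw [smul_eq_mul, mul_pow, hax, mul_left_comm]
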